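/- With the notation of the previous item (I_0 = h holomorphic with |h| ≤ M and |h'| ≤ M on 𝔻, and I_n = I_{n-1} - p·z^{-n}∫_0^z ζ^{n-1}I_{n-1}dζ), the derivatives satisfy sup_{z∈𝔻}|I_n'(z)| ≤ M·(1 + p·Σ_{i=1}^n (i+1)(p+1)^{i-1}) for n = 1, …, p-1. In particular each I_n is Lipschitz continuous on 𝔻. -/

import Mathlib

open Metric MeasureTheory

private lemma auxA (p : ℕ) : ∀ m : ℕ, m ≤ p →
    1 + ((p:ℝ)+1) * ∑ i ∈ Finset.Icc 1 m, ((i:ℝ)+1)*((p:ℝ)+1)^(i-1)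
      ≤ ((m:ℝ)+2) * ((p:ℝ)+1)^m := by
  intro m
  induction m with
  | zero => norm_num
  | succ k ih =>
    intro hk
    have h1 := ih (Nat.le_of_succ_le hk)
    rw [Finset.sum_Icc_succ_top (Nat.one_le_iff_ne_zero.mpr (Nat.succ_ne_zero k))]
    have hq : ((k:ℝ)+2) ≤ (p:ℝ)+1 := by
      have : (k:ℝ)+1 ≤ (p:ℝ) := by exact_mod_cast hk
      linarith
    have hqpow : (0:ℝ) ≤ ((p:ℝ)+1)^k := by positivity
    simp only [Nat.add_sub_cancel]
    push_cast
    rw [pow_succ]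
    nlinarith [h1, hq, hqpow, mul_nonneg (by linarith : (0:ℝ) ≤ (p:ℝ)+1 - ((k:ℝ)+2)) hqpow]

private lemma auxS_nonneg (p m : ℕ) :
    0 ≤ ∑ i ∈ Finset.Icc 1 m, ((i:ℝ)+1)*((p:ℝ)+1)^(i-1) :=
  Finset.sum_nonneg fun i _ => by positivity

private lemma auxB (p : ℕ) (M : ℝ) (hM0 : 0 ≤ M) (m : ℕ) (hm : m + 1 ≤ p) :
    M * (1 + (p:ℝ) * ∑ i ∈ Finset.Icc 1 m, ((i:ℝ)+1)*((p:ℝ)+1)^(i-1)) * (1 + (p:ℝ))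
      ≤ M * (1 + (p:ℝ) * ∑ i ∈ Finset.Icc 1 (m+1), ((i:ℝ)+1)*((p:ℝ)+1)^(i-1)) := by
  have hA := auxA p m (le_trans (Nat.le_succ m) hm)
  have hS := auxS_nonneg p m
  have hp0 : (0:ℝ) ≤ p := Nat.cast_nonneg p
  rw [Finset.sum_Icc_succ_top (Nat.one_le_iff_ne_zero.mpr (Nat.succ_ne_zero m))]
  simp only [Nat.add_sub_cancel]
  push_cast
  have key : (1 + (p:ℝ) * ∑ i ∈ Finset.Icc 1 m, ((i:ℝ)+1)*((p:ℝ)+1)^(i-1)) * (1 + (p:ℝ))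
      ≤ 1 + (p:ℝ) * ((∑ i ∈ Finset.Icc 1 m, ((i:ℝ)+1)*((p:ℝ)+1)^(i-1)) + ((m:ℝ)+1+1)*((p:ℝ)+1)^m) := by
    nlinarith [mul_le_mul_of_nonneg_left hA hp0, mul_nonneg hp0 hS]
  calc M * (1 + (p:ℝ) * ∑ i ∈ Finset.Icc 1 m, ((i:ℝ)+1)*((p:ℝ)+1)^(i-1)) * (1 + (p:ℝ))
      = M * ((1 + (p:ℝ) * ∑ i ∈ Finset.Icc 1 m, ((i:ℝ)+1)*((p:ℝ)+1)^(i-1)) * (1 + (p:ℝ))) := by ring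
    _ ≤ M * (1 + (p:ℝ) * ((∑ i ∈ Finset.Icc 1 m, ((i:ℝ)+1)*((p:ℝ)+1)^(i-1)) + ((m:ℝ)+1+1)*((p:ℝ)+1)^m)) :=
        mul_le_mul_of_nonneg_left key hM0
    _ = M * (1 + (p:ℝ) * ((∑ i ∈ Finset.Icc 1 m, ((i:ℝ)+1)*((p:ℝ)+1)^(i-1)) + (((m:ℝ)+1)+1)*((p:ℝ)+1)^m)) := by ring

private lemma keyDeriv (n : ℕ) (f : ℂ → ℂ) (hf : DifferentiableOn ℂ f (ball (0:ℂ) 1))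
    (C : ℝ) (hC : ∀ z ∈ ball (0:ℂ) 1, ‖deriv f z‖ ≤ C)
    (z₀ : ℂ) (hz₀ : z₀ ∈ ball (0:ℂ) 1) :
    HasDerivAt (fun z => ∫ t in (0:ℝ)..1, (t:ℂ)^n * f ((t:ℂ)*z))
      (∫ t in (0:ℝ)..1, (t:ℂ)^n * ((t:ℂ) * deriv f ((t:ℂ)*z₀))) z₀ := by
  rw [mem_ball_zero_iff] at hz₀
  set ε : ℝ := (1 - ‖z₀‖)/2 with hε
  have εpos : 0 < ε := by simp only [hε]; linarith
  have hC0 : 0 ≤ C := le_trans (norm_nonneg _) (hC 0 (by simp))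
  have hsub : ∀ x ∈ ball z₀ ε, ∀ t ∈ Set.Icc (0:ℝ) 1, (t:ℂ)*x ∈ ball (0:ℂ) 1 := by
    intro x hx t ht
    rw [mem_ball_zero_iff]
    rw [mem_ball, dist_eq_norm] at hx
    have hxn : ‖x‖ < 1 := by
      calc ‖x‖ = ‖x - z₀ + z₀‖ := by ring_nf
        _ ≤ ‖x - z₀‖ + ‖z₀‖ := norm_add_le _ _
        _ < ε + ‖z₀‖ := by linarith
        _ < 1 := by simp only [hε]; linarith
    calc ‖(t:ℂ)*x‖ = |t| * ‖x‖ := by rw [norm_mul, Complex.norm_real, Real.norm_eq_abs]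
      _ ≤ 1 * ‖x‖ := by
          apply mul_le_mul_of_nonneg_right _ (norm_nonneg _)
          rw [abs_le]; constructor <;> linarith [ht.1, ht.2]
      _ < 1 := by linarith
  have hball : z₀ ∈ Metric.ball z₀ ε := mem_ball_self εpos
  have hderiv_an : AnalyticOnNhd ℂ (deriv f) (ball (0:ℂ) 1) :=
    (hf.analyticOnNhd isOpen_ball).deriv
  have hderiv_cont : ContinuousOn (deriv f) (ball (0:ℂ) 1) :=
    fun x hx => ((hderiv_an x hx).continuousAt).continuousWithinAt
  have hc : ∀ x ∈ ball z₀ ε, ContinuousOn (fun t : ℝ => (t:ℂ)^n * f ((t:ℂ)*x)) (Set.Icc 0 1) := by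
    intro x hx
    apply ContinuousOn.mul
    · exact (Complex.continuous_ofReal.pow n).continuousOn
    · exact hf.continuousOn.comp
        ((Complex.continuous_ofReal.mul continuous_const).continuousOn)
        (fun t ht => hsub x hx t ht)
  have hc' : ContinuousOn (fun t : ℝ => (t:ℂ)^n * ((t:ℂ) * deriv f ((t:ℂ)*z₀))) (Set.Icc 0 1) := by
    apply ContinuousOn.mul
    · exact (Complex.continuous_ofReal.pow n).continuousOn
    · exact Complex.continuous_ofReal.continuousOn.mul
        (hderiv_cont.comp ((Complex.continuous_ofReal.mul continuous_const).continuousOn)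
          (fun t ht => hsub z₀ hball t ht))
  have huIoc : Set.uIoc (0:ℝ) 1 ⊆ Set.Icc 0 1 := by
    rw [Set.uIoc_of_le zero_le_one]; exact Set.Ioc_subset_Icc_self
  have hmain := intervalIntegral.hasDerivAt_integral_of_dominated_loc_of_deriv_le
    (F := fun (x : ℂ) (t : ℝ) => (t:ℂ)^n * f ((t:ℂ)*x))
    (F' := fun (x : ℂ) (t : ℝ) => (t:ℂ)^n * ((t:ℂ) * deriv f ((t:ℂ)*x)))
    (bound := fun _ => C) (μ := volume) (a := 0) (b := 1) (ball_mem_nhds z₀ εpos)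
    (Filter.eventually_of_mem (isOpen_ball.mem_nhds hball)
      (fun x hx => ((hc x hx).mono huIoc).aestronglyMeasurable measurableSet_uIoc))
    (((hc z₀ hball).mono (by rw [Set.uIcc_of_le zero_le_one])).intervalIntegrable)
    ((hc'.mono huIoc).aestronglyMeasurable measurableSet_uIoc)
    (Filter.Eventually.of_forall (fun t ht x hx => by
      rw [Set.uIoc_of_le zero_le_one] at ht
      have htx := hsub x hx t (Set.Ioc_subset_Icc_self ht)
      have h1 : ‖(t:ℂ)^n * ((t:ℂ) * deriv f ((t:ℂ)*x))‖
          = |t|^n * (|t| * ‖deriv f ((t:ℂ)*x)‖) := by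
        rw [norm_mul, norm_mul, norm_pow, Complex.norm_real, Real.norm_eq_abs]
      rw [h1]
      have ht1 : |t| ≤ 1 := by rw [abs_le]; constructor <;> linarith [ht.1, ht.2]
      have ht0 : 0 ≤ |t| := abs_nonneg t
      have h2 : ‖deriv f ((t:ℂ)*x)‖ ≤ C := hC _ htx
      calc |t|^n * (|t| * ‖deriv f ((t:ℂ)*x)‖) ≤ 1 * (1 * C) := by
            exact mul_le_mul (pow_le_one₀ ht0 ht1)
              (mul_le_mul ht1 h2 (norm_nonneg _) zero_le_one)
              (mul_nonneg ht0 (norm_nonneg _)) zero_le_one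
        _ = C := by ring))
    intervalIntegrable_const
    (Filter.Eventually.of_forall (fun t ht x hx => by
      rw [Set.uIoc_of_le zero_le_one] at ht
      have htx := hsub x hx t (Set.Ioc_subset_Icc_self ht)
      have hd : HasDerivAt f (deriv f ((t:ℂ)*x)) ((t:ℂ)*x) :=
        (hf.differentiableAt (isOpen_ball.mem_nhds htx)).hasDerivAt
      have hin : HasDerivAt (fun y : ℂ => (t:ℂ)*y) (t:ℂ) x := by
        simpa using (hasDerivAt_id x).const_mul (t:ℂ)
      have : HasDerivAt (fun y => (t:ℂ)^n * f ((t:ℂ)*y)) ((t:ℂ)^n * (deriv f ((t:ℂ)*x) * (t:ℂ))) x :=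
        (hd.comp x hin).const_mul ((t:ℂ)^n)
      refine this.congr_deriv ?_
      ring))
  exact hmain.2

open Metric in
theorem stmt_8 (p : ℕ) (hp : 1 ≤ p) (M : ℝ) (h : ℂ → ℂ)
    (hhol : DifferentiableOn ℂ h (ball (0 : ℂ) 1))
    (hM : ∀ z ∈ ball (0 : ℂ) 1, ‖h z‖ ≤ M)
    (hM' : ∀ z ∈ ball (0 : ℂ) 1, ‖deriv h z‖ ≤ M)
    (I : ℕ → ℂ → ℂ) (hI0 : I 0 = h)
    (hrec : ∀ n : ℕ, 1 ≤ n → n ≤ p - 1 → ∀ z ∈ ball (0 : ℂ) 1,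
      I n z = I (n - 1) z -
        (p : ℂ) * ∫ t in (0 : ℝ)..1, (t : ℂ) ^ (n - 1) * I (n - 1) ((t : ℂ) * z)) :
    ∀ n : ℕ, 1 ≤ n → n ≤ p - 1 →
      (∀ z ∈ ball (0 : ℂ) 1, ‖deriv (I n) z‖ ≤
        M * (1 + (p : ℝ) * ∑ i ∈ Finset.Icc 1 n, ((i : ℝ) + 1) * ((p : ℝ) + 1) ^ (i - 1))) ∧
      LipschitzOnWith
        (Real.toNNReal (M * (1 + (p : ℝ) *
          ∑ i ∈ Finset.Icc 1 n, ((i : ℝ) + 1) * ((p : ℝ) + 1) ^ (i - 1))))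
        (I n) (ball (0 : ℂ) 1) := by
  have hM0 : 0 ≤ M := le_trans (norm_nonneg _) (hM 0 (by simp))
  have key : ∀ n : ℕ, n ≤ p - 1 →
      DifferentiableOn ℂ (I n) (ball (0:ℂ) 1) ∧
      ∀ z ∈ ball (0:ℂ) 1, ‖deriv (I n) z‖ ≤
        M * (1 + (p:ℝ) * ∑ i ∈ Finset.Icc 1 n, ((i:ℝ)+1)*((p:ℝ)+1)^(i-1)) := by
    intro n
    induction n with
    | zero =>
      intro _
      rw [hI0]
      refine ⟨hhol, fun z hz => ?_⟩
      have : ∑ i ∈ Finset.Icc (1:ℕ) 0, ((i:ℝ)+1)*((p:ℝ)+1)^(i-1) = 0 := by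
        rw [Finset.Icc_eq_empty (by norm_num)]; simp
      rw [this]
      simpa using hM' z hz
    | succ n ih =>
      intro hn1
      obtain ⟨hdf, hbd⟩ := ih (Nat.le_of_succ_le hn1)
      have hrec' : ∀ z ∈ ball (0:ℂ) 1, I (n+1) z
          = I n z - (p:ℂ) * ∫ t in (0:ℝ)..1, (t:ℂ)^n * I n ((t:ℂ)*z) := by
        intro z hz
        simpa using hrec (n+1) (Nat.succ_le_succ (Nat.zero_le n)) hn1 z hz
      have hstep : ∀ z ∈ ball (0:ℂ) 1, HasDerivAt (I (n+1))
          (deriv (I n) z - (p:ℂ) * ∫ t in (0:ℝ)..1, (t:ℂ)^n * ((t:ℂ) * deriv (I n) ((t:ℂ)*z))) z := by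
        intro z hz
        have hJ := keyDeriv n (I n) hdf
          (M * (1 + (p:ℝ) * ∑ i ∈ Finset.Icc 1 n, ((i:ℝ)+1)*((p:ℝ)+1)^(i-1))) hbd z hz
        have hg : HasDerivAt (fun w => I n w - (p:ℂ) * ∫ t in (0:ℝ)..1, (t:ℂ)^n * I n ((t:ℂ)*w))
            (deriv (I n) z - (p:ℂ) * ∫ t in (0:ℝ)..1, (t:ℂ)^n * ((t:ℂ) * deriv (I n) ((t:ℂ)*z))) z :=
          ((hdf.differentiableAt (isOpen_ball.mem_nhds hz)).hasDerivAt).sub (hJ.const_mul (p:ℂ))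
        exact hg.congr_of_eventuallyEq
          (Filter.eventuallyEq_of_mem (isOpen_ball.mem_nhds hz) (fun w hw => hrec' w hw))
      refine ⟨fun z hz => ((hstep z hz).differentiableAt).differentiableWithinAt, fun z hz => ?_⟩
      rw [(hstep z hz).deriv]
      set Bn : ℝ := M * (1 + (p:ℝ) * ∑ i ∈ Finset.Icc 1 n, ((i:ℝ)+1)*((p:ℝ)+1)^(i-1)) with hBn
      have hBn0 : 0 ≤ Bn := mul_nonneg hM0 (by nlinarith [auxS_nonneg p n, Nat.cast_nonneg (α := ℝ) p])
      have hzn : ‖z‖ < 1 := mem_ball_zero_iff.mp hz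
      have hInt : ‖∫ t in (0:ℝ)..1, (t:ℂ)^n * ((t:ℂ) * deriv (I n) ((t:ℂ)*z))‖ ≤ Bn * |1 - 0| := by
        apply intervalIntegral.norm_integral_le_of_norm_le_const
        intro t ht
        rw [Set.uIoc_of_le zero_le_one] at ht
        have ht1 : |t| ≤ 1 := by rw [abs_le]; constructor <;> linarith [ht.1, ht.2]
        have ht0 : 0 ≤ |t| := abs_nonneg t
        have htz : (t:ℂ)*z ∈ ball (0:ℂ) 1 := by
          rw [mem_ball_zero_iff, norm_mul, Complex.norm_real, Real.norm_eq_abs]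
          calc |t| * ‖z‖ ≤ 1 * ‖z‖ := mul_le_mul_of_nonneg_right ht1 (norm_nonneg z)
            _ < 1 := by linarith
        have h2 := hbd _ htz
        have h1 : ‖(t:ℂ)^n * ((t:ℂ) * deriv (I n) ((t:ℂ)*z))‖
            = |t|^n * (|t| * ‖deriv (I n) ((t:ℂ)*z)‖) := by
          rw [norm_mul, norm_mul, norm_pow, Complex.norm_real, Real.norm_eq_abs]
        rw [h1]
        calc |t|^n * (|t| * ‖deriv (I n) ((t:ℂ)*z)‖) ≤ 1 * (1 * Bn) :=
              mul_le_mul (pow_le_one₀ ht0 ht1)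
                (mul_le_mul ht1 h2 (norm_nonneg _) zero_le_one)
                (mul_nonneg ht0 (norm_nonneg _)) zero_le_one
          _ = Bn := by ring
      have hnp : n + 1 ≤ p := le_trans hn1 (Nat.sub_le p 1)
      calc ‖deriv (I n) z - (p:ℂ) * ∫ t in (0:ℝ)..1, (t:ℂ)^n * ((t:ℂ) * deriv (I n) ((t:ℂ)*z))‖
          ≤ ‖deriv (I n) z‖ + ‖(p:ℂ)‖ * ‖∫ t in (0:ℝ)..1, (t:ℂ)^n * ((t:ℂ) * deriv (I n) ((t:ℂ)*z))‖ := by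
            rw [← norm_mul]; exact norm_sub_le _ _
        _ ≤ Bn + (p:ℝ) * (Bn * |1 - 0|) := by
            apply add_le_add (hbd z hz)
            apply mul_le_mul _ hInt (norm_nonneg _) (Nat.cast_nonneg p)
            rw [Complex.norm_natCast]
        _ = Bn * (1 + (p:ℝ)) := by rw [abs_of_nonneg (by norm_num : (0:ℝ) ≤ 1 - 0)]; ring
        _ ≤ M * (1 + (p:ℝ) * ∑ i ∈ Finset.Icc 1 (n+1), ((i:ℝ)+1)*((p:ℝ)+1)^(i-1)) := by
            rw [hBn]; exact auxB p M hM0 n hnp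
  intro n _ hnp
  obtain ⟨hdf, hbd⟩ := key n hnp
  refine ⟨hbd, ?_⟩
  set Bn : ℝ := M * (1 + (p:ℝ) * ∑ i ∈ Finset.Icc 1 n, ((i:ℝ)+1)*((p:ℝ)+1)^(i-1)) with hBn
  have hBn0 : 0 ≤ Bn := mul_nonneg hM0 (by nlinarith [auxS_nonneg p n, Nat.cast_nonneg (α := ℝ) p])
  have hdiffAt : ∀ x ∈ ball (0:ℂ) 1, DifferentiableAt ℂ (I n) x :=
    fun x hx => hdf.differentiableAt (isOpen_ball.mem_nhds hx)
  have hfbound : ∀ x ∈ ball (0:ℂ) 1, ‖fderiv ℂ (I n) x‖ ≤ Bn := by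
    intro x hx
    have hh := (hdiffAt x hx).hasDerivAt.hasFDerivAt
    rw [hh.fderiv]
    simpa only [ContinuousLinearMap.norm_smulRight_apply, ContinuousLinearMap.norm_toSpanSingleton, norm_one, one_mul] using hbd x hx
  rw [lipschitzOnWith_iff_dist_le_mul]
  intro x hx y hy
  rw [dist_eq_norm, dist_eq_norm, Real.coe_toNNReal _ hBn0]
  exact (convex_ball (0:ℂ) 1).norm_image_sub_le_of_norm_fderiv_le hdiffAt hfbound hy hx
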